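/- Let m ∈ [1,2], ω_j = √(j²+m), and let ℓ = α−β with α,β : ℤ → ℕ finitely supported, N := |α|+|β|, satisfying Σ_i (α_i−β_i)|i| ≤ 10 Σ_i |α_i−β_i|. Let m₁, m₂, m₃ be the three largest (in absolute value) entries of the rearrangement m(ℓ), with signs σ_l = sign(α_{m_l}−β_{m_l}). If σ₁σ₂ = 1 then |σ₁ ω_{m₁} + σ₂ ω_{m₂}| ≤ 22 N ⟨m₃⟩ implies |m₁|, |m₂| ≤ 22 N ⟨m₃⟩; more precisely, from |ω·ℓ| ≤ 20N and |ω·ℓ̃| ≤ 2N⟨m₃⟩ (where ℓ̃ = ℓ − σ₁e_{m₁} − σ₂e_{m₂}) one deduces |σ₁ω_{m₁}+σ₂ω_{m₂}| ≤ 22N⟨m₃⟩. -/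

import Mathlib

open Set Real

/-- Step 2 of the improved estimates: with ℓ̃ = ℓ − σ₁e_{m₁} − σ₂e_{m₂}, from
|ω·ℓ| ≤ 20N and |ω·ℓ̃| ≤ 2N⟨m₃⟩ one deduces |σ₁ω_{m₁} + σ₂ω_{m₂}| ≤ 22N⟨m₃⟩;
and if moreover σ₁σ₂ = 1 then |m₁|, |m₂| ≤ 22N⟨m₃⟩. -/
theorem stmt19 (m : ℝ) (hm : m ∈ Set.Icc (1:ℝ) 2)
    (ℓ ℓt : ℤ →₀ ℤ) (m₁ m₂ m₃ : ℤ) (σ₁ σ₂ : ℤ)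
    (hσ₁ : σ₁ = 1 ∨ σ₁ = -1) (hσ₂ : σ₂ = 1 ∨ σ₂ = -1)
    (hσ₁def : σ₁ = Int.sign (ℓ m₁)) (hσ₂def : σ₂ = Int.sign (ℓ m₂))
    (hord : |m₃| ≤ |m₂| ∧ |m₂| ≤ |m₁|)
    (N : ℕ)
    (hℓt : ℓt = ℓ - Finsupp.single m₁ σ₁ - Finsupp.single m₂ σ₂)
    (h1 : |∑ᶠ j : ℤ, (ℓ j : ℝ) * Real.sqrt ((j:ℝ)^2 + m)| ≤ 20 * N)
    (h2 : |∑ᶠ j : ℤ, (ℓt j : ℝ) * Real.sqrt ((j:ℝ)^2 + m)|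
      ≤ 2 * N * max 1 |(m₃:ℝ)|) :
    |(σ₁ : ℝ) * Real.sqrt ((m₁:ℝ)^2 + m) + (σ₂ : ℝ) * Real.sqrt ((m₂:ℝ)^2 + m)|
      ≤ 22 * N * max 1 |(m₃:ℝ)| ∧
    (σ₁ * σ₂ = 1 →
      (|m₁| : ℝ) ≤ 22 * N * max 1 |(m₃:ℝ)| ∧ (|m₂| : ℝ) ≤ 22 * N * max 1 |(m₃:ℝ)|) := by
  set ω : ℤ → ℝ := fun j => Real.sqrt ((j:ℝ)^2 + m) with hω
  have hfin : ∀ f : ℤ →₀ ℤ, (Function.support (fun j => (f j : ℝ) * ω j)).Finite := by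
    intro f
    apply Set.Finite.subset f.finite_support
    intro j hj
    simp only [Function.mem_support] at hj ⊢
    intro h0
    exact hj (by rw [h0]; simp)
  have hsingle : ∀ (a : ℤ) (σ : ℤ),
      ∑ᶠ j : ℤ, ((Finsupp.single a σ : ℤ →₀ ℤ) j : ℝ) * ω j = (σ : ℝ) * ω a := by
    intro a σ
    rw [finsum_eq_single _ a]
    · rw [Finsupp.single_eq_same]
    · intro x hx
      rw [Finsupp.single_eq_of_ne' (Ne.symm hx)]
      simp
  have key : ∑ᶠ j : ℤ, (ℓt j : ℝ) * ω j
      = (∑ᶠ j : ℤ, (ℓ j : ℝ) * ω j) - (σ₁ : ℝ) * ω m₁ - (σ₂ : ℝ) * ω m₂ := by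
    have e1 : ∀ j : ℤ, (ℓt j : ℝ) * ω j
        = ((fun j => ((ℓ j : ℝ) - ((Finsupp.single m₁ σ₁ : ℤ →₀ ℤ) j : ℝ)) * ω j) j)
          - ((Finsupp.single m₂ σ₂ : ℤ →₀ ℤ) j : ℝ) * ω j := by
      intro j
      simp [hℓt, sub_mul]
    rw [finsum_congr e1]
    rw [finsum_sub_distrib]
    · rw [hsingle]
      congr 1
      have e2 : ∀ j : ℤ, ((ℓ j : ℝ) - ((Finsupp.single m₁ σ₁ : ℤ →₀ ℤ) j : ℝ)) * ω j
          = (ℓ j : ℝ) * ω j - ((Finsupp.single m₁ σ₁ : ℤ →₀ ℤ) j : ℝ) * ω j := by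
        intro j; ring
      rw [finsum_congr e2, finsum_sub_distrib (hfin ℓ) (hfin _), hsingle]
    · apply Set.Finite.subset ((hfin ℓ).union (hfin (Finsupp.single m₁ σ₁)))
      intro j hj
      simp only [Function.mem_support, sub_mul] at hj
      by_contra hc
      simp only [Set.mem_union, Function.mem_support, not_or, not_not] at hc
      exact hj (by rw [hc.1, hc.2, sub_zero])
    · exact hfin _
  have hM : (1:ℝ) ≤ max 1 |(m₃:ℝ)| := le_max_left _ _
  have key2 : |(σ₁ : ℝ) * ω m₁ + (σ₂ : ℝ) * ω m₂| ≤ 22 * N * max 1 |(m₃:ℝ)| := by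
    have : (σ₁ : ℝ) * ω m₁ + (σ₂ : ℝ) * ω m₂
        = (∑ᶠ j : ℤ, (ℓ j : ℝ) * ω j) - ∑ᶠ j : ℤ, (ℓt j : ℝ) * ω j := by
      rw [key]; ring
    rw [this]
    calc |(∑ᶠ j : ℤ, (ℓ j : ℝ) * ω j) - ∑ᶠ j : ℤ, (ℓt j : ℝ) * ω j|
        ≤ |∑ᶠ j : ℤ, (ℓ j : ℝ) * ω j| + |∑ᶠ j : ℤ, (ℓt j : ℝ) * ω j| := abs_sub _ _
      _ ≤ 20 * N + 2 * N * max 1 |(m₃:ℝ)| := add_le_add h1 h2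
      _ ≤ 20 * N * max 1 |(m₃:ℝ)| + 2 * N * max 1 |(m₃:ℝ)| := by
          have : (20:ℝ) * N = 20 * N * 1 := by ring
          nlinarith [Nat.cast_nonneg (α := ℝ) N]
      _ = 22 * N * max 1 |(m₃:ℝ)| := by ring
  refine ⟨key2, fun hσσ => ?_⟩
  have hσeq : σ₁ = σ₂ := by rcases hσ₁ with h|h <;> rcases hσ₂ with h'|h' <;> rw [h, h'] <;>
      rw [h, h'] at hσσ <;> norm_num at hσσ
  have hωpos : ∀ j : ℤ, |(j:ℝ)| ≤ ω j := by
    intro j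
    rw [hω, ← Real.sqrt_sq_eq_abs]
    exact Real.sqrt_le_sqrt (by linarith [hm.1])
  have hωnn : ∀ j : ℤ, 0 ≤ ω j := fun j => Real.sqrt_nonneg _
  have habs : |(σ₁ : ℝ) * ω m₁ + (σ₂ : ℝ) * ω m₂| = ω m₁ + ω m₂ := by
    rcases hσ₁ with h|h
    · rw [h, ← hσeq, h]
      push_cast
      rw [one_mul, one_mul, abs_of_nonneg (by linarith [hωnn m₁, hωnn m₂])]
    · rw [h, ← hσeq, h]
      push_cast
      rw [neg_one_mul, neg_one_mul, ← neg_add, abs_neg,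
        abs_of_nonneg (by linarith [hωnn m₁, hωnn m₂])]
  rw [habs] at key2
  constructor
  · calc (|m₁| : ℝ) ≤ ω m₁ := hωpos m₁
      _ ≤ ω m₁ + ω m₂ := by linarith [hωnn m₂]
      _ ≤ _ := key2
  · calc (|m₂| : ℝ) ≤ ω m₂ := hωpos m₂
      _ ≤ ω m₁ + ω m₂ := by linarith [hωnn m₁]
      _ ≤ _ := key2
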